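/- Let d, K, s, s* be positive integers with s* < s ≤ d. Let M ∈ ℝ^{d×K} be a matrix with at most s* nonzero rows, and let A ∈ ℝ^{d×K} be arbitrary. Let HT(A, s) denote any matrix obtained from A by keeping s rows of A whose Euclidean norms are the s largest (ties broken arbitrarily) and setting all other rows to zero. Then ‖HT(A, s) − M‖_F^2 ≤ (1 + 2·sqrt(s*/(s − s*)))·‖A − M‖_F^2. -/

import Mathlib

noncomputable section

open scoped BigOperators

namespace HomoPursuit

open Matrix

/-- Squared Frobenius norm of a real matrix. -/
def frobSq {m n : Type*} [Fintype m] [Fintype n] (A : Matrix m n ℝ) : ℝ :=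
  ∑ i, ∑ j, (A i j) ^ 2

/-- Frobenius norm of a real matrix. -/
def frob {m n : Type*} [Fintype m] [Fintype n] (A : Matrix m n ℝ) : ℝ :=
  Real.sqrt (frobSq A)

/-- Frobenius inner product `⟨A, B⟩ = tr(Aᵀ B)`. -/
def mdot {m n : Type*} [Fintype m] [Fintype n] (A B : Matrix m n ℝ) : ℝ :=
  ∑ i, ∑ j, A i j * B i j

/-- The `j`-th largest singular value of a real matrix (1-indexed); `0` if out of range. -/
def sval {m n : Type*} [Fintype m] [Fintype n] [DecidableEq n] (A : Matrix m n ℝ) (j : ℕ) : ℝ :=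
  (((Finset.univ.val.map fun i =>
      Real.sqrt (((by simpa using Matrix.isHermitian_conjTranspose_mul_self A : (Aᵀ * A).IsHermitian)).eigenvalues i)).toList.insertionSort
      (· ≥ ·)).getD (j - 1) 0)

/-- Spectral (operator) norm: the largest singular value. -/
def spec {m n : Type*} [Fintype m] [Fintype n] [DecidableEq n] (A : Matrix m n ℝ) : ℝ :=
  sval A 1

/-- The positive-semidefinite square root `(Aᵀ A)^{1/2}` of a Gram matrix. -/
def gramSqrt {m k : Type*} [Fintype m] [Fintype k] [DecidableEq k] (A : Matrix m k ℝ) :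
    Matrix k k ℝ :=
  (Matrix.posSemidef_conjTranspose_mul_self A).1.eigenvectorUnitary.1 *
    Matrix.diagonal ((↑) ∘ (Real.sqrt ·) ∘ (Matrix.posSemidef_conjTranspose_mul_self A).1.eigenvalues) *
    (star (Matrix.posSemidef_conjTranspose_mul_self A).1.eigenvectorUnitary : Matrix k k ℝ)

/-- `(Aᵀ A)^{-1/2}`. -/
def invGramSqrt {m k : Type*} [Fintype m] [Fintype k] [DecidableEq k] (A : Matrix m k ℝ) :
    Matrix k k ℝ :=
  (gramSqrt A)⁻¹

/-- Square root of a diagonal matrix with given (nonnegative) diagonal entries. -/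
def diagSqrt {k : ℕ} (d : Fin k → ℝ) : Matrix (Fin k) (Fin k) ℝ :=
  Matrix.diagonal fun j => Real.sqrt (d j)

/-- Squared Euclidean norm of row `i` of `A`. -/
def rowNormSq {d K : Type*} [Fintype d] [Fintype K] (A : Matrix d K ℝ) (i : d) : ℝ :=
  ∑ j, (A i j) ^ 2

/-- `IsHT A s A'` : `A'` is obtained from `A` by keeping `s` rows of largest Euclidean norm
(ties broken arbitrarily) and zeroing the remaining rows. -/
def IsHT {d K : Type*} [Fintype d] [Fintype K] [DecidableEq d]
    (A : Matrix d K ℝ) (s : ℕ) (A' : Matrix d K ℝ) : Prop :=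
  ∃ S : Finset d, S.card = s ∧
    (∀ i ∈ S, ∀ j ∉ S, rowNormSq A j ≤ rowNormSq A i) ∧
    A' = Matrix.of fun i j => if i ∈ S then A i j else 0

/-- Numeric inequality used in the hard-thresholding bound. -/
lemma numeric_bound {sR σ c t : ℝ} (hσ : 0 < σ) (hσs : σ < sR) (hc : 0 ≤ c) (hcσ : c ≤ σ)
    (ht : 0 ≤ t) (htσ : t ≤ σ - c) :
    (2 * Real.sqrt (σ / (sR - σ)) + 1) * t ≤ (2 * Real.sqrt (σ / (sR - σ)))^2 * (sR - c) := by
  set g := Real.sqrt (σ / (sR - σ)) with hg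
  have hden : 0 < sR - σ := by linarith
  have hg0 : 0 ≤ g := Real.sqrt_nonneg _
  have hg2 : g ^ 2 = σ / (sR - σ) := Real.sq_sqrt (by positivity)
  have hg2' : g ^ 2 * (sR - σ) = σ := by rw [hg2]; field_simp
  have hrw : (2 * g) ^ 2 * (sR - c) = 4 * g ^ 2 * (sR - c) := by ring
  rw [hrw]
  rcases le_or_gt sR (2 * σ) with hcase | hcase
  · -- γ ≥ 1, so g ≥ 1
    have hg21 : 1 ≤ g ^ 2 := by
      rw [hg2, le_div_iff₀ hden]; linarith
    have hg1 : 1 ≤ g := by nlinarith [hg21, hg0]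
    have hsRc : (0:ℝ) ≤ sR - c := by linarith
    have htsc : t ≤ sR - c := by linarith
    have h3 : 2 * g + 1 ≤ 4 * g ^ 2 := by nlinarith [sq_nonneg (g - 1), hg1]
    calc (2 * g + 1) * t ≤ (2 * g + 1) * (sR - c) :=
          mul_le_mul_of_nonneg_left htsc (by linarith)
      _ ≤ (4 * g ^ 2) * (sR - c) := mul_le_mul_of_nonneg_right h3 hsRc
      _ = 4 * g ^ 2 * (sR - c) := by ring
  · -- γ < 1, so g ≤ 1
    have hgle : g ≤ 1 := by
      have h' : g ^ 2 ≤ 1 := by rw [hg2, div_le_one hden]; linarith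
      nlinarith [hg0, h']
    have f1 : (2 * g + 1) * t ≤ 3 * t := mul_le_mul_of_nonneg_right (by linarith) ht
    have f2 : 4 * (g ^ 2 * (sR - σ)) ≤ 4 * (g ^ 2 * (sR - c)) := by
      have h' : g ^ 2 * (sR - σ) ≤ g ^ 2 * (sR - c) :=
        mul_le_mul_of_nonneg_left (by linarith) (by positivity)
      linarith
    have f3 : 4 * σ ≤ 4 * g ^ 2 * (sR - c) := by
      have := hg2' ▸ f2
      linarith [this]
    linarith [f1, f3]

/-- Rowwise inequality: `‖m‖² − ‖a−m‖² ≤ (1+1/L)‖a‖² + L‖a−m‖²`. -/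
lemma row_bound {K : ℕ} (a m : Fin K → ℝ) {L : ℝ} (hL : 0 < L) :
    (∑ j, (m j)^2) - (∑ j, (a j - m j)^2) ≤
      (1 + 1/L) * (∑ j, (a j)^2) + L * (∑ j, (a j - m j)^2) := by
  set p := ∑ j, (a j)^2 with hp
  set r := ∑ j, (a j - m j)^2 with hr
  have hp0 : 0 ≤ p := Finset.sum_nonneg fun j _ => sq_nonneg _
  have hr0 : 0 ≤ r := Finset.sum_nonneg fun j _ => sq_nonneg _
  have hqr : (∑ j, (m j)^2) = p - 2 * (∑ j, a j * (a j - m j)) + r := by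
    rw [hp, hr, Finset.mul_sum, ← Finset.sum_sub_distrib, ← Finset.sum_add_distrib]
    exact Finset.sum_congr rfl fun j _ => by ring
  have hcs : ∑ j, (-(a j)) * (a j - m j) ≤
      Real.sqrt (∑ j, (-(a j))^2) * Real.sqrt (∑ j, (a j - m j)^2) :=
    Real.sum_mul_le_sqrt_mul_sqrt _ _ _
  have hneg : ∑ j, (-(a j)) * (a j - m j) = -(∑ j, a j * (a j - m j)) := by
    rw [← Finset.sum_neg_distrib]
    exact Finset.sum_congr rfl fun j _ => by ring
  have hnsq : (∑ j, (-(a j))^2) = p := by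
    rw [hp]; exact Finset.sum_congr rfl fun j _ => by ring
  rw [hneg, hnsq, ← hr] at hcs
  have hamgm : 2 * (Real.sqrt p * Real.sqrt r) ≤ (1/L) * p + L * r := by
    have hsp : Real.sqrt p ^ 2 = p := Real.sq_sqrt hp0
    have hsr : Real.sqrt r ^ 2 = r := Real.sq_sqrt hr0
    have h2 : L * (2 * (Real.sqrt p * Real.sqrt r)) ≤ p + L^2 * r := by
      nlinarith [sq_nonneg (Real.sqrt p - L * Real.sqrt r), hsp, hsr]
    rw [← mul_le_mul_iff_right₀ hL]
    calc L * (2 * (Real.sqrt p * Real.sqrt r)) ≤ p + L^2 * r := h2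
      _ = L * ((1/L) * p + L * r) := by field_simp
  linarith [hqr, hcs, hamgm]

set_option maxHeartbeats 1600000

/-- **Lemma (hard-thresholding error bound).** -/
theorem hard_thresholding_bound
    (d K s sstar : ℕ) (hd : 0 < d) (hK : 0 < K) (hsstar : 0 < sstar)
    (h1 : sstar < s) (h2 : s ≤ d)
    (M A A' : Matrix (Fin d) (Fin K) ℝ)
    (hM : Set.ncard {i | M i ≠ 0} ≤ sstar)
    (hHT : IsHT A s A') :
    frobSq (A' - M) ≤
      (1 + 2 * Real.sqrt ((sstar : ℝ) / ((s : ℝ) - sstar))) * frobSq (A - M) := by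
  classical
  obtain ⟨S, hScard, hSord, hA'⟩ := hHT
  set L : ℝ := 2 * Real.sqrt ((sstar : ℝ) / ((s : ℝ) - sstar)) with hL_def
  have hden : (0:ℝ) < (s:ℝ) - (sstar:ℝ) := by
    have h' : (sstar:ℝ) < (s:ℝ) := by exact_mod_cast h1
    linarith
  have hLpos : 0 < L := by
    rw [hL_def]
    have h' : 0 < Real.sqrt ((sstar:ℝ) / ((s:ℝ) - sstar)) :=
      Real.sqrt_pos.2 (div_pos (by exact_mod_cast hsstar) hden)
    linarith
  set p : Fin d → ℝ := fun i => ∑ j, (A i j)^2 with hp_def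
  set q : Fin d → ℝ := fun i => ∑ j, (M i j)^2 with hq_def
  set r : Fin d → ℝ := fun i => ∑ j, (A i j - M i j)^2 with hr_def
  have hp0 : ∀ i, 0 ≤ p i := fun i => by
    simp only [hp_def]
    exact Finset.sum_nonneg fun j _ => sq_nonneg _
  have hr0 : ∀ i, 0 ≤ r i := fun i => by
    simp only [hr_def]
    exact Finset.sum_nonneg fun j _ => sq_nonneg _
  set T : Finset (Fin d) := Finset.univ.filter (fun i => M i ≠ 0) with hT_def
  have hTcard : T.card ≤ sstar := by
    have h : {i | M i ≠ 0} = (T : Set (Fin d)) := by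
      ext i; simp [hT_def]
    rwa [h, Set.ncard_coe_finset] at hM
  have hMT : ∀ i, i ∉ T → M i = 0 := by
    intro i hi
    by_contra h
    exact hi (by simp [hT_def, h])
  have hqT : ∀ i, i ∉ T → q i = 0 := by
    intro i hi
    simp only [hq_def]
    simp [hMT i hi]
  have hrT : ∀ i, i ∉ T → r i = p i := by
    intro i hi
    simp only [hr_def, hp_def]
    simp [hMT i hi]
  -- Frobenius decompositions
  have hFA : frobSq (A - M) = ∑ i, r i := by
    simp only [frobSq, Matrix.sub_apply, hr_def]
  have hFA' : frobSq (A' - M) = ∑ i ∈ S, r i + ∑ i ∈ Sᶜ, q i := by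
    rw [hA']
    simp only [frobSq, Matrix.sub_apply, Matrix.of_apply]
    calc ∑ i, ∑ j, ((if i ∈ S then A i j else 0) - M i j)^2
        = (∑ i ∈ S, ∑ j, ((if i ∈ S then A i j else 0) - M i j)^2)
          + ∑ i ∈ Sᶜ, ∑ j, ((if i ∈ S then A i j else 0) - M i j)^2 :=
          (Finset.sum_add_sum_compl S _).symm
      _ = ∑ i ∈ S, r i + ∑ i ∈ Sᶜ, q i := by
          congr 1
          · refine Finset.sum_congr rfl fun i hi => ?_
            simp only [hr_def]
            exact Finset.sum_congr rfl fun j _ => by rw [if_pos hi]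
          · refine Finset.sum_congr rfl fun i hi => ?_
            have hiS : i ∉ S := Finset.mem_compl.1 hi
            simp only [hq_def]
            refine Finset.sum_congr rfl fun j _ => ?_
            rw [if_neg hiS]
            ring
  have hsub : ∑ i ∈ Sᶜ, q i = ∑ i ∈ T \ S, q i := by
    symm
    apply Finset.sum_subset
    · intro i hi
      rw [Finset.mem_compl]
      exact (Finset.mem_sdiff.1 hi).2
    · intro i hi hnot
      apply hqT
      intro hiT
      exact hnot (Finset.mem_sdiff.2 ⟨hiT, Finset.mem_compl.1 hi⟩)
  -- cardinalities
  set c := (S ∩ T).card with hc_def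
  set n := (S \ T).card with hn_def
  set tt := (T \ S).card with htt_def
  have hnc : n + c = s := by
    rw [hn_def, hc_def, Finset.card_sdiff_add_card_inter, hScard]
  have hcT : c ≤ T.card := by
    rw [hc_def]; exact Finset.card_le_card Finset.inter_subset_right
  have hcs : c ≤ sstar := le_trans hcT hTcard
  have hTSc : (T ∩ S).card = c := by rw [hc_def, Finset.inter_comm]
  have httc : tt + c = T.card := by
    rw [htt_def, ← hTSc, Finset.card_sdiff_add_card_inter]
  have hnpos : 0 < n := by omega
  have hnR : (0:ℝ) < (n:ℝ) := by exact_mod_cast hnpos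
  have httR : (tt:ℝ) ≤ (sstar:ℝ) - (c:ℝ) := by
    have h' : tt + c ≤ sstar := by omega
    have h'' : (tt:ℝ) + (c:ℝ) ≤ (sstar:ℝ) := by exact_mod_cast h'
    linarith
  have hcσR : (c:ℝ) ≤ (sstar:ℝ) := by exact_mod_cast hcs
  have hcast_n : ((n:ℕ):ℝ) = (s:ℝ) - (c:ℝ) := by
    have h' : (n:ℝ) + (c:ℝ) = (s:ℝ) := by exact_mod_cast hnc
    linarith
  -- numeric inequality
  have hnum : (L + 1) * (tt:ℝ) ≤ L^2 * (n:ℝ) := by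
    have hb := numeric_bound (sR := (s:ℝ)) (σ := (sstar:ℝ)) (c := (c:ℝ)) (t := (tt:ℝ))
      (by exact_mod_cast hsstar) (by exact_mod_cast h1) (Nat.cast_nonneg c) hcσR
      (Nat.cast_nonneg tt) httR
    rw [hL_def, hcast_n]
    linarith [hb]
  -- each missed row has small norm
  have hmin : ∀ i ∈ T \ S, (n:ℝ) * p i ≤ ∑ j ∈ S \ T, p j := by
    intro i hi
    have hiS : i ∉ S := (Finset.mem_sdiff.1 hi).2
    have hb : (S \ T).card • p i ≤ ∑ j ∈ S \ T, p j := by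
      apply Finset.card_nsmul_le_sum
      intro j hj
      have hjS : j ∈ S := (Finset.mem_sdiff.1 hj).1
      have h' := hSord j hjS i hiS
      simpa [rowNormSq, hp_def] using h'
    simpa [hn_def, nsmul_eq_mul] using hb
  set x := ∑ j ∈ S \ T, p j with hx_def
  set P := ∑ i ∈ T \ S, p i with hP_def
  set y := ∑ i ∈ T \ S, r i with hy_def
  have hx0 : 0 ≤ x := by
    rw [hx_def]; exact Finset.sum_nonneg fun j _ => hp0 j
  have hP0 : 0 ≤ P := by
    rw [hP_def]; exact Finset.sum_nonneg fun i _ => hp0 i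
  have hNP : (n:ℝ) * P ≤ (tt:ℝ) * x := by
    rw [hP_def, Finset.mul_sum]
    calc ∑ i ∈ T \ S, (n:ℝ) * p i ≤ ∑ _i ∈ T \ S, x := Finset.sum_le_sum hmin
      _ = (tt:ℝ) * x := by rw [Finset.sum_const, nsmul_eq_mul, ← htt_def]
  have hc1 : (n:ℝ) * ((L+1) * P) ≤ (n:ℝ) * (L^2 * x) := by
    have f1 : (L+1) * ((n:ℝ) * P) ≤ (L+1) * ((tt:ℝ) * x) :=
      mul_le_mul_of_nonneg_left hNP (by linarith)
    have f2 : ((L+1) * (tt:ℝ)) * x ≤ (L^2 * (n:ℝ)) * x :=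
      mul_le_mul_of_nonneg_right hnum hx0
    nlinarith [f1, f2]
  have hPP : (L+1) * P ≤ L^2 * x := le_of_mul_le_mul_left hc1 hnR
  have hkey : (1 + 1/L) * P ≤ L * x := by
    have heq : (1 + 1/L) * P = ((L+1) * P) / L := by
      field_simp
    rw [heq, div_le_iff₀ hLpos]
    exact hPP.trans_eq (by ring)
  -- sum the rowwise bounds
  have hrow : ∀ i ∈ T \ S, q i - r i ≤ (1 + 1/L) * p i + L * r i := by
    intro i _
    have h' := row_bound (K := K) (fun j => A i j) (fun j => M i j) hLpos
    simpa [hp_def, hq_def, hr_def] using h'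
  have hqsum : ∑ i ∈ T \ S, q i ≤ y + ((1 + 1/L) * P + L * y) := by
    have hh1 : ∑ i ∈ T \ S, q i ≤ ∑ i ∈ T \ S, (r i + ((1 + 1/L) * p i + L * r i)) :=
      Finset.sum_le_sum fun i hi => by linarith [hrow i hi]
    have hh2 : ∑ i ∈ T \ S, (r i + ((1 + 1/L) * p i + L * r i))
        = y + ((1 + 1/L) * P + L * y) := by
      rw [Finset.sum_add_distrib, Finset.sum_add_distrib, ← Finset.mul_sum, ← Finset.mul_sum,
        ← hy_def, ← hP_def]
    linarith [hh1, hh2]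
  -- final assembly
  have hF0 : 0 ≤ ∑ i, r i := Finset.sum_nonneg fun i _ => hr0 i
  have hxy : x + y ≤ ∑ i, r i := by
    have hxr : x = ∑ j ∈ S \ T, r j := by
      rw [hx_def]
      exact Finset.sum_congr rfl fun j hj => (hrT j (Finset.mem_sdiff.1 hj).2).symm
    have hdisj : Disjoint (S \ T) (T \ S) := disjoint_sdiff_sdiff
    have hu : ∑ i ∈ (S \ T) ∪ (T \ S), r i ≤ ∑ i, r i :=
      Finset.sum_le_sum_of_subset_of_nonneg (Finset.subset_univ _) (fun i _ _ => hr0 i)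
    rw [Finset.sum_union hdisj, ← hxr, ← hy_def] at hu
    exact hu
  have hSy : ∑ i ∈ S, r i + y ≤ ∑ i, r i := by
    have hdisj : Disjoint S (T \ S) := Finset.disjoint_sdiff
    have hu : ∑ i ∈ S ∪ (T \ S), r i ≤ ∑ i, r i :=
      Finset.sum_le_sum_of_subset_of_nonneg (Finset.subset_univ _) (fun i _ _ => hr0 i)
    rw [Finset.sum_union hdisj, ← hy_def] at hu
    exact hu
  have hLF : L * x + L * y ≤ L * (∑ i, r i) := by
    have h' := mul_le_mul_of_nonneg_left hxy hLpos.le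
    nlinarith [h']
  rw [hFA', hsub, hFA]
  linarith [hqsum, hkey, hSy, hLF]

end HomoPursuit
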